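/- Let n > C ≥ 1 and let S ⊆ {1,...,n} with |S| = C+1, with weights w'_j = 1/(C+1) for j ∈ S and w'_j = 1/C otherwise. Then the maximum of ∑_j x_j over x ∈ {0,1}^n satisfying ∑_j w'_j x_j ≤ 1 equals C+1, and it is attained uniquely at the indicator vector of S. -/

import Mathlib

/-- the maximum of the all-ones objective under the perturbed constraint is C+1,
attained uniquely at the indicator vector of S. -/
theorem stmt_2 (n C : ℕ) (hC : 1 ≤ C) (hn : C < n)
    (S : Finset (Fin n)) (hS : S.card = C + 1)
    (w' : Fin n → ℝ)
    (hw' : ∀ j, w' j = if j ∈ S then 1 / ((C : ℝ) + 1) else 1 / (C : ℝ)) :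
    (∑ j, w' j * (if j ∈ S then (1 : ℝ) else 0)) ≤ 1 ∧
    (∑ j, (if j ∈ S then (1 : ℝ) else 0)) = (C : ℝ) + 1 ∧
    (∀ x : Fin n → ℝ, (∀ j, x j = 0 ∨ x j = 1) → (∑ j, w' j * x j) ≤ 1 →
      (∑ j, x j) ≤ (C : ℝ) + 1 ∧
      ((∑ j, x j) = (C : ℝ) + 1 → x = fun j => if j ∈ S then (1 : ℝ) else 0)) := by
  have hCpos : (0:ℝ) < (C:ℝ) := by exact_mod_cast hC
  have hC1pos : (0:ℝ) < (C:ℝ) + 1 := by linarith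
  refine ⟨?_, ?_, ?_⟩
  · have h1 : ∑ j, w' j * (if j ∈ S then (1:ℝ) else 0)
        = ∑ j, (if j ∈ S then (1:ℝ)/((C:ℝ)+1) else 0) := by
      apply Finset.sum_congr rfl
      intro j _
      rw [hw']
      split <;> ring
    rw [h1, Finset.sum_ite_mem, Finset.univ_inter, Finset.sum_const, nsmul_eq_mul, hS]
    push_cast
    rw [mul_one_div, div_le_one hC1pos]
  · rw [Finset.sum_ite_mem, Finset.univ_inter, Finset.sum_const, nsmul_eq_mul, mul_one, hS]
    push_cast
    ring
  · intro x hx01 hcon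
    set T : Finset (Fin n) := Finset.univ.filter (fun j => x j = 1) with hT
    have hxT : ∀ j, x j = if j ∈ T then (1:ℝ) else 0 := by
      intro j
      rcases hx01 j with h | h <;> simp [hT, h]
    have hsum : ∑ j, x j = (T.card : ℝ) := by
      rw [Finset.sum_congr rfl (fun j _ => hxT j), Finset.sum_ite_mem, Finset.univ_inter,
        Finset.sum_const, nsmul_eq_mul, mul_one]
    set a := (T ∩ S).card with ha
    set b := (T \ S).card with hb
    have hab : T.card = a + b := by
      rw [ha, hb, Finset.card_inter_add_card_sdiff]
    have hwsum : ∑ j, w' j * x j = (a:ℝ) * (1/((C:ℝ)+1)) + (b:ℝ) * (1/(C:ℝ)) := by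
      have h1 : ∑ j, w' j * x j = ∑ j ∈ T, w' j :=
        calc ∑ j, w' j * x j = ∑ j, (if j ∈ T then w' j else 0) :=
              Finset.sum_congr rfl (fun j _ => by rw [hxT j]; split <;> ring)
          _ = ∑ j ∈ T, w' j := by rw [Finset.sum_ite_mem, Finset.univ_inter]
      have h2 : ∑ j ∈ T ∩ S, w' j = (a:ℝ) * (1/((C:ℝ)+1)) :=
        calc ∑ j ∈ T ∩ S, w' j = ∑ _j ∈ T ∩ S, (1:ℝ)/((C:ℝ)+1) :=
              Finset.sum_congr rfl (fun j hj => by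
                rw [hw']; simp [(Finset.mem_inter.mp hj).2])
          _ = (a:ℝ) * (1/((C:ℝ)+1)) := by rw [Finset.sum_const, nsmul_eq_mul]
      have h3 : ∑ j ∈ T \ S, w' j = (b:ℝ) * (1/(C:ℝ)) :=
        calc ∑ j ∈ T \ S, w' j = ∑ _j ∈ T \ S, (1:ℝ)/(C:ℝ) :=
              Finset.sum_congr rfl (fun j hj => by
                rw [hw']; simp [(Finset.mem_sdiff.mp hj).2])
          _ = (b:ℝ) * (1/(C:ℝ)) := by rw [Finset.sum_const, nsmul_eq_mul]
      rw [h1, ← Finset.sum_inter_add_sum_sdiff T S w', h2, h3]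
    rw [hwsum] at hcon
    have key : (a:ℝ) * (C:ℝ) + (b:ℝ) * ((C:ℝ)+1) ≤ (C:ℝ) * ((C:ℝ)+1) := by
      have hmul := mul_le_mul_of_nonneg_right hcon
        (show (0:ℝ) ≤ (C:ℝ) * ((C:ℝ)+1) by positivity)
      have expand : ((a:ℝ)*(1/((C:ℝ)+1)) + (b:ℝ)*(1/(C:ℝ))) * ((C:ℝ)*((C:ℝ)+1))
          = (a:ℝ) * (C:ℝ) + (b:ℝ) * ((C:ℝ)+1) := by
        field_simp
      rw [expand, one_mul] at hmul
      exact hmul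
    have keyN : a * C + b * (C+1) ≤ C * (C+1) := by exact_mod_cast key
    have haS : a ≤ C + 1 := by
      rw [ha, ← hS]
      exact Finset.card_le_card Finset.inter_subset_right
    have hcard : T.card ≤ C + 1 := by
      rw [hab]
      by_contra h
      push_neg at h
      have h2 : (C + 2) * C ≤ (a + b) * C := Nat.mul_le_mul_right C h
      nlinarith [keyN, hC]
    refine ⟨?_, ?_⟩
    · rw [hsum]
      have : (T.card : ℝ) ≤ ((C:ℕ) + 1 : ℕ) := by exact_mod_cast hcard
      push_cast at this
      linarith
    · intro heq
      rw [hsum] at heq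
      have hTc : T.card = C + 1 := by exact_mod_cast heq
      have hb0 : b = 0 := by
        rw [hab] at hTc
        nlinarith [keyN]
      have ha1 : a = C + 1 := by omega
      have hTS : T = S := by
        have hsub : T ⊆ S := by
          rw [← Finset.sdiff_eq_empty_iff_subset]
          exact Finset.card_eq_zero.mp hb0
        exact Finset.eq_of_subset_of_card_le hsub (by omega)
      funext j
      rw [hxT j, hTS]
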